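/- For any two-dimensional lattice polygon Δ, the lattice width of the interior lattice polygon Δ^(1) satisfies lw(Δ^(1)) ≤ lw(Δ) − 2. -/

import Mathlib

open Set

def toR2 (q : ℤ × ℤ) : ℝ × ℝ := ((q.1 : ℝ), (q.2 : ℝ))

def isLatticePt (p : ℝ × ℝ) : Prop := ∃ q : ℤ × ℤ, p = toR2 q

def IsLatticePolygon (Δ : Set (ℝ × ℝ)) : Prop :=
  ∃ S : Finset (ℤ × ℤ), Δ = convexHull ℝ (toR2 '' ↑S)

def IsZAffine (φ : ℝ × ℝ → ℝ × ℝ) : Prop :=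
  ∃ a b c d e f : ℤ, (a * d - b * c = 1 ∨ a * d - b * c = -1) ∧
    ∀ p : ℝ × ℝ, φ p = ((a : ℝ) * p.1 + (b : ℝ) * p.2 + (e : ℝ),
      (c : ℝ) * p.1 + (d : ℝ) * p.2 + (f : ℝ))

def widthLE (Δ : Set (ℝ × ℝ)) (s : ℤ) : Prop :=
  ∃ φ, IsZAffine φ ∧ ∀ p ∈ Δ, 0 ≤ (φ p).2 ∧ (φ p).2 ≤ (s : ℝ)

open Classical in
noncomputable def latticeWidth (Δ : Set (ℝ × ℝ)) : ℤ :=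
  if Δ = ∅ then -1 else sInf {s : ℤ | 0 ≤ s ∧ widthLE Δ s}

def simplexPoly (d : ℤ) : Set (ℝ × ℝ) :=
  convexHull ℝ {((0:ℝ), (0:ℝ)), ((d:ℝ), (0:ℝ)), ((0:ℝ), (d:ℝ))}

def interiorPoly (Δ : Set (ℝ × ℝ)) : Set (ℝ × ℝ) :=
  convexHull ℝ {p | p ∈ interior Δ ∧ isLatticePt p}

def equivPoly (Δ Δ' : Set (ℝ × ℝ)) : Prop :=
  ∃ φ, IsZAffine φ ∧ φ '' Δ = Δ'

def TwoDim (Δ : Set (ℝ × ℝ)) : Prop := affineSpan ℝ Δ = ⊤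


-- S nonempty
lemma exists_width (Δ : Set (ℝ × ℝ)) (hΔ : IsLatticePolygon Δ) :
    ∃ s : ℤ, 0 ≤ s ∧ widthLE Δ s := by
  obtain ⟨S, rfl⟩ := hΔ
  rcases S.eq_empty_or_nonempty with h | h
  · subst h
    refine ⟨0, le_refl _, id, ⟨1, 0, 0, 1, 0, 0, Or.inl (by ring), fun p => by
      simp [Prod.ext_iff]⟩, ?_⟩
    simp
  · set m := S.inf' h Prod.snd with hm
    set M := S.sup' h Prod.snd with hM
    obtain ⟨q, hq⟩ := h
    have hmM : m ≤ M := le_trans (S.inf'_le _ hq) (S.le_sup' _ hq)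
    refine ⟨M - m, by omega, fun p => (p.1, p.2 - (m : ℝ)), ⟨1, 0, 0, 1, 0, -m,
      Or.inl (by ring), fun p => by push_cast; simp [Prod.ext_iff]; ring⟩, ?_⟩
    have hconv : Convex ℝ {p : ℝ × ℝ | (m : ℝ) ≤ p.2 ∧ p.2 ≤ (M : ℝ)} := by
      intro x hx y hy a b ha hb hab
      simp only [mem_setOf_eq] at *
      have hsnd : (a • x + b • y).2 = a * x.2 + b * y.2 := by simp
      rw [hsnd]
      have hmm : (m:ℝ) = a * m + b * m := by rw [← add_mul, hab, one_mul]
      have hMM : (M:ℝ) = a * M + b * M := by rw [← add_mul, hab, one_mul]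
      constructor
      · nlinarith [mul_le_mul_of_nonneg_left hx.1 ha, mul_le_mul_of_nonneg_left hy.1 hb]
      · nlinarith [mul_le_mul_of_nonneg_left hx.2 ha, mul_le_mul_of_nonneg_left hy.2 hb]
    have hsub : convexHull ℝ (toR2 '' ↑S) ⊆ {p : ℝ × ℝ | (m : ℝ) ≤ p.2 ∧ p.2 ≤ (M : ℝ)} := by
      apply convexHull_min _ hconv
      rintro _ ⟨r, hr, rfl⟩
      simp only [mem_setOf_eq, toR2]
      exact ⟨by exact_mod_cast S.inf'_le _ hr, by exact_mod_cast S.le_sup' _ hr⟩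
    intro p hp
    obtain ⟨h1, h2⟩ := hsub hp
    constructor
    · simp only; linarith
    · simp only; push_cast; linarith

-- width 0 impossible for two-dimensional
lemma not_widthLE_zero (Δ : Set (ℝ × ℝ)) (h2 : TwoDim Δ) : ¬ widthLE Δ 0 := by
  rintro ⟨φ, ⟨a, b, c, d, e, f, hdet, hφ⟩, hb⟩
  have hzero : ∀ p ∈ Δ, (c : ℝ) * p.1 + (d : ℝ) * p.2 + (f : ℝ) = 0 := by
    intro p hp
    have := hb p hp
    rw [hφ p] at this
    simp at this
    linarith [this.1, this.2]
  set L : AffineSubspace ℝ (ℝ × ℝ) :=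
    { carrier := {p : ℝ × ℝ | (c : ℝ) * p.1 + (d : ℝ) * p.2 + (f : ℝ) = 0}
      smul_vsub_vadd_mem' := by
        intro t p₁ p₂ p₃ h₁ h₂ h₃
        simp only [mem_setOf_eq] at *
        have e1 : (t • (p₁ -ᵥ p₂) +ᵥ p₃ : ℝ × ℝ).1 = t * (p₁.1 - p₂.1) + p₃.1 := by
          simp [vsub_eq_sub, vadd_eq_add]
        have e2 : (t • (p₁ -ᵥ p₂) +ᵥ p₃ : ℝ × ℝ).2 = t * (p₁.2 - p₂.2) + p₃.2 := by
          simp [vsub_eq_sub, vadd_eq_add]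
        rw [e1, e2]
        linear_combination t * h₁ - t * h₂ + h₃ } with hL
  have hle : affineSpan ℝ Δ ≤ L := affineSpan_le.mpr (fun p hp => hzero p hp)
  rw [h2] at hle
  have hall : ∀ p : ℝ × ℝ, (c : ℝ) * p.1 + (d : ℝ) * p.2 + (f : ℝ) = 0 := by
    intro p
    exact hle (AffineSubspace.mem_top ℝ (ℝ × ℝ) p)
  have h00 := hall (0, 0)
  have h10 := hall (1, 0)
  have h01 := hall (0, 1)
  simp only [mul_zero, mul_one, zero_add, add_zero, mul_comm] at h00 h10 h01
  have hc0 : (c : ℝ) = 0 := by linarith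
  have hd0 : (d : ℝ) = 0 := by linarith
  have hc' : c = 0 := by exact_mod_cast hc0
  have hd' : d = 0 := by exact_mod_cast hd0
  rw [hc', hd'] at hdet
  simp at hdet

lemma interior_bound (Δ : Set (ℝ × ℝ)) {s c d f : ℤ} (hcd : ¬(c = 0 ∧ d = 0))
    (hb : ∀ p ∈ Δ, 0 ≤ (c:ℝ) * p.1 + (d:ℝ) * p.2 + (f:ℝ) ∧
      (c:ℝ) * p.1 + (d:ℝ) * p.2 + (f:ℝ) ≤ (s:ℝ)) :
    ∀ p, p ∈ interior Δ → isLatticePt p →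
      1 ≤ (c:ℝ) * p.1 + (d:ℝ) * p.2 + (f:ℝ) ∧
      (c:ℝ) * p.1 + (d:ℝ) * p.2 + (f:ℝ) ≤ (s:ℝ) - 1 := by
  intro p hp hlat
  obtain ⟨U, hUΔ, hUopen, hpU⟩ := mem_interior.mp hp
  obtain ⟨ε, hε, hball⟩ := Metric.isOpen_iff.mp hUopen p hpU
  set v : ℝ × ℝ := ((c:ℝ), (d:ℝ)) with hv
  have hv0 : v ≠ 0 := by
    rw [hv]
    intro hcon
    rw [Prod.ext_iff] at hcon
    simp only [Prod.fst_zero, Prod.snd_zero] at hcon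
    exact hcd ⟨by exact_mod_cast hcon.1, by exact_mod_cast hcon.2⟩
  have hnv : 0 < ‖v‖ := norm_pos_iff.mpr hv0
  set δ : ℝ := ε / (‖v‖ + 1) with hδ
  have hδpos : 0 < δ := div_pos hε (by linarith)
  have hδsmall : δ * ‖v‖ < ε := by
    rw [hδ, div_mul_eq_mul_div, div_lt_iff₀ (by linarith)]
    nlinarith
  have hmemball : ∀ t : ℝ, |t| ≤ δ → p + t • v ∈ Δ := by
    intro t ht
    apply hUΔ
    apply hball
    rw [Metric.mem_ball, dist_eq_norm, add_sub_cancel_left, norm_smul]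
    calc |t| * ‖v‖ ≤ δ * ‖v‖ := mul_le_mul_of_nonneg_right ht (le_of_lt hnv)
      _ < ε := hδsmall
  have hcomp : ∀ t : ℝ, (c:ℝ) * (p + t • v).1 + (d:ℝ) * (p + t • v).2 + (f:ℝ)
      = ((c:ℝ) * p.1 + (d:ℝ) * p.2 + (f:ℝ)) + t * ((c:ℝ)^2 + (d:ℝ)^2) := by
    intro t
    simp [hv]
    ring
  have hq2 : 0 < (c:ℝ)^2 + (d:ℝ)^2 := by
    rcases not_and_or.mp hcd with h | h
    · have hne : (c:ℝ) ≠ 0 := by exact_mod_cast h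
      have := lt_of_le_of_ne (sq_nonneg (c:ℝ)) (Ne.symm (pow_ne_zero 2 hne))
      nlinarith [sq_nonneg (d:ℝ)]
    · have hne : (d:ℝ) ≠ 0 := by exact_mod_cast h
      have := lt_of_le_of_ne (sq_nonneg (d:ℝ)) (Ne.symm (pow_ne_zero 2 hne))
      nlinarith [sq_nonneg (c:ℝ)]
  have hub := (hb _ (hmemball δ (by rw [abs_of_pos hδpos]))).2
  have hlb := (hb _ (hmemball (-δ) (by rw [abs_neg, abs_of_pos hδpos]))).1
  rw [hcomp δ] at hub
  rw [hcomp (-δ)] at hlb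
  have hlt : (c:ℝ) * p.1 + (d:ℝ) * p.2 + (f:ℝ) < (s:ℝ) := by nlinarith
  have hgt : 0 < (c:ℝ) * p.1 + (d:ℝ) * p.2 + (f:ℝ) := by nlinarith
  obtain ⟨r, rfl⟩ := hlat
  have hval : (c:ℝ) * (toR2 r).1 + (d:ℝ) * (toR2 r).2 + (f:ℝ)
      = ((c * r.1 + d * r.2 + f : ℤ) : ℝ) := by
    simp only [toR2]
    push_cast
    ring
  rw [hval] at hlt hgt ⊢
  have h1 : 0 < c * r.1 + d * r.2 + f := by exact_mod_cast hgt
  have h2 : c * r.1 + d * r.2 + f < s := by exact_mod_cast hlt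
  constructor
  · exact_mod_cast h1
  · have h3 : c * r.1 + d * r.2 + f ≤ s - 1 := by omega
    have h4 : ((c * r.1 + d * r.2 + f : ℤ) : ℝ) ≤ ((s - 1 : ℤ) : ℝ) := by exact_mod_cast h3
    rw [Int.cast_sub, Int.cast_one] at h4
    exact h4

lemma interior_step (Δ : Set (ℝ × ℝ)) {s : ℤ} (hw : widthLE Δ s)
    (hne : {p : ℝ × ℝ | p ∈ interior Δ ∧ isLatticePt p}.Nonempty) :
    2 ≤ s ∧ widthLE (interiorPoly Δ) (s - 2) := by
  obtain ⟨φ, ⟨a, b, c, d, e, f, hdet, hφ⟩, hb⟩ := hw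
  have hb' : ∀ p ∈ Δ, 0 ≤ (c:ℝ) * p.1 + (d:ℝ) * p.2 + (f:ℝ) ∧
      (c:ℝ) * p.1 + (d:ℝ) * p.2 + (f:ℝ) ≤ (s:ℝ) := by
    intro p hp
    have := hb p hp
    rw [hφ p] at this
    exact this
  have hcd : ¬(c = 0 ∧ d = 0) := by
    rintro ⟨rfl, rfl⟩
    simp at hdet
  have key := interior_bound Δ hcd hb'
  obtain ⟨p₀, hp₀⟩ := hne
  have h₀ := key p₀ hp₀.1 hp₀.2
  have hs2 : 2 ≤ s := by
    have h1 : (1:ℝ) ≤ (s:ℝ) - 1 := le_trans h₀.1 h₀.2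
    have hs : (2:ℝ) ≤ (s:ℝ) := by linarith
    exact_mod_cast hs
  refine ⟨hs2, fun p => ((a:ℝ) * p.1 + (b:ℝ) * p.2 + (e:ℝ),
      (c:ℝ) * p.1 + (d:ℝ) * p.2 + (f:ℝ) - 1),
    ⟨a, b, c, d, e, f - 1, hdet, fun p => by
      simp only [Prod.mk.injEq]
      push_cast
      constructor
      · trivial
      · ring⟩, ?_⟩
  have hC : Convex ℝ {p : ℝ × ℝ | 1 ≤ (c:ℝ) * p.1 + (d:ℝ) * p.2 + (f:ℝ) ∧
      (c:ℝ) * p.1 + (d:ℝ) * p.2 + (f:ℝ) ≤ (s:ℝ) - 1} := by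
    intro x hx y hy α β hα hβ hαβ
    simp only [mem_setOf_eq] at *
    have e1 : (α • x + β • y).1 = α * x.1 + β * y.1 := by simp
    have e2 : (α • x + β • y).2 = α * x.2 + β * y.2 := by simp
    rw [e1, e2]
    have h1 : (1:ℝ) = α * 1 + β * 1 := by rw [mul_one, mul_one, hαβ]
    have hf : (f:ℝ) = α * (f:ℝ) + β * (f:ℝ) := by rw [← add_mul, hαβ, one_mul]
    have hg : (s:ℝ) - 1 = α * ((s:ℝ) - 1) + β * ((s:ℝ) - 1) := by
      rw [← add_mul, hαβ, one_mul]
    constructor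
    · nlinarith [mul_le_mul_of_nonneg_left hx.1 hα, mul_le_mul_of_nonneg_left hy.1 hβ]
    · nlinarith [mul_le_mul_of_nonneg_left hx.2 hα, mul_le_mul_of_nonneg_left hy.2 hβ]
  have hsub : interiorPoly Δ ⊆ {p : ℝ × ℝ | 1 ≤ (c:ℝ) * p.1 + (d:ℝ) * p.2 + (f:ℝ) ∧
      (c:ℝ) * p.1 + (d:ℝ) * p.2 + (f:ℝ) ≤ (s:ℝ) - 1} :=
    convexHull_min (fun p hp => key p hp.1 hp.2) hC
  intro p hp
  obtain ⟨h1, h2⟩ := hsub hp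
  refine ⟨by simp only; linarith, ?_⟩
  simp only
  push_cast
  linarith

/-- For any two-dimensional lattice polygon Δ, lw(Δ⁽¹⁾) ≤ lw(Δ) − 2. -/
theorem lattice_width_interior_le (Δ : Set (ℝ × ℝ))
    (hΔ : IsLatticePolygon Δ) (h2 : TwoDim Δ) :
    latticeWidth (interiorPoly Δ) ≤ latticeWidth Δ - 2 := by
  have hΔne : Δ ≠ ∅ := by
    intro h
    rw [TwoDim, h] at h2
    have hbt : (⊥ : AffineSubspace ℝ (ℝ × ℝ)) = ⊤ := by
      rw [← h2]
      simp
    exact AffineSubspace.bot_ne_top ℝ (ℝ × ℝ) (ℝ × ℝ) hbt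
  obtain ⟨s₀, hs₀⟩ := exists_width Δ hΔ
  have hSne : Set.Nonempty {s : ℤ | 0 ≤ s ∧ widthLE Δ s} := ⟨s₀, hs₀⟩
  have hSbdd : BddBelow {s : ℤ | 0 ≤ s ∧ widthLE Δ s} := ⟨0, fun t ht => ht.1⟩
  have hmem := Int.csInf_mem hSne hSbdd
  have hRHS : latticeWidth Δ = sInf {s : ℤ | 0 ≤ s ∧ widthLE Δ s} := by
    rw [latticeWidth, if_neg hΔne]
  rw [hRHS]
  rcases eq_empty_or_nonempty {p : ℝ × ℝ | p ∈ interior Δ ∧ isLatticePt p} with h | h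
  · have hie : interiorPoly Δ = ∅ := by rw [interiorPoly, h, convexHull_empty]
    have hLHS : latticeWidth (interiorPoly Δ) = -1 := by
      rw [latticeWidth, if_pos hie]
    rw [hLHS]
    have hne0 : sInf {s : ℤ | 0 ≤ s ∧ widthLE Δ s} ≠ 0 := by
      intro h0
      apply not_widthLE_zero Δ h2
      rw [← h0]
      exact hmem.2
    have h0 := hmem.1
    omega
  · obtain ⟨hs2, hw'⟩ := interior_step Δ hmem.2 h
    have hine : interiorPoly Δ ≠ ∅ := by
      obtain ⟨p, hp⟩ := h
      exact Set.Nonempty.ne_empty ⟨p, subset_convexHull ℝ _ hp⟩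
    have hLHS : latticeWidth (interiorPoly Δ) =
        sInf {s : ℤ | 0 ≤ s ∧ widthLE (interiorPoly Δ) s} := by
      rw [latticeWidth, if_neg hine]
    rw [hLHS]
    exact csInf_le ⟨0, fun t ht => ht.1⟩ ⟨by omega, hw'⟩
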